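/- A graph U contains no induced subgraph isomorphic to the claw K_{1,3} and no triangle K_3 if and only if every connected component of U is a cycle of length at least 4, a path, or an isolated vertex. -/

import Mathlib

open SimpleGraph

/-- The claw `K_{1,3}`: vertex 0 joined to each of the pairwise
    nonadjacent vertices 1, 2, 3. -/
def claw : SimpleGraph (Fin 4) := SimpleGraph.fromRel (fun a _ => a = 0)

/-- A graph is claw-free if it has no induced subgraph isomorphic to `K_{1,3}`. -/
def ClawFree {V : Type*} (G : SimpleGraph V) : Prop := IsEmpty (claw ↪g G)

/-- Every connected component of `G` is a cycle of length at least 4, a path,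
    or an isolated vertex. -/
def ComponentsCyclePath {V : Type*} (G : SimpleGraph V) : Prop :=
  ∀ c : G.ConnectedComponent,
    (∃ n, 4 ≤ n ∧ Nonempty (G.induce c.supp ≃g cycleGraph n)) ∨
    (∃ n, 1 ≤ n ∧ Nonempty (G.induce c.supp ≃g pathGraph n))

lemma claw_adj {i j : Fin 4} : claw.Adj i j ↔ i ≠ j ∧ (i = 0 ∨ j = 0) := by
  simp [claw, fromRel_adj]

section helpers
variable {V : Type*} {G : SimpleGraph V}

lemma fin_sub_val_one {n : ℕ} (i j : Fin n) :
    (i - j).val = 1 ↔ (i.val = j.val + 1 ∨ (i.val = 0 ∧ 2 ≤ n ∧ j.val = n - 1)) := by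
  obtain ⟨a, ha⟩ := i; obtain ⟨b, hb⟩ := j
  rw [Fin.sub_def]
  simp only
  rcases le_or_gt b a with h | h
  · have e : (n - b + a) % n = a - b := by
      rw [show n - b + a = (a - b) + n by omega, Nat.add_mod_right, Nat.mod_eq_of_lt (by omega)]
    rw [e]; omega
  · have e : (n - b + a) % n = a + n - b := by
      rw [Nat.mod_eq_of_lt (by omega)]; omega
    rw [e]; omega

lemma getVert_support_getElem {V : Type*} {G : SimpleGraph V} :
    ∀ {u v : V} (p : G.Walk u v) (i : ℕ) (h : i < p.support.length), p.support[i] = p.getVert i := by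
  intro u v p
  induction p with
  | nil =>
    intro i h
    simp only [SimpleGraph.Walk.support_nil, List.length_singleton] at h
    interval_cases i
    simp
  | cons ha q ih =>
    intro i h
    cases i with
    | zero => simp
    | succ i =>
      rw [SimpleGraph.Walk.getVert_cons_succ]
      have h' : i < q.support.length := by
        simpa [SimpleGraph.Walk.support_cons] using h
      calc (Walk.cons ha q).support[i+1] = q.support[i] := by
            simp [SimpleGraph.Walk.support_cons]
        _ = q.getVert i := ih i h'

lemma IsPath.getVert_inj' {u v : V} {p : G.Walk u v} (hp : p.IsPath) {i j : ℕ}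
    (hi : i ≤ p.length) (hj : j ≤ p.length) (h : p.getVert i = p.getVert j) : i = j := by
  have hl : p.support.length = p.length + 1 := p.length_support
  have h1 : p.support[i]'(by omega) = p.support[j]'(by omega) := by
    rw [getVert_support_getElem p i (by omega), getVert_support_getElem p j (by omega)]
    exact h
  have := hp.support_nodup
  exact (List.Nodup.getElem_inj_iff this).mp h1

/-- a walk from inside S to outside S crosses the boundary. -/

lemma exists_boundary_edge' {S : Set V} :
    ∀ {a b : V} (q : G.Walk a b), a ∈ S → b ∉ S →
      ∃ y z, G.Adj y z ∧ y ∈ S ∧ z ∉ S := by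
  intro a b q
  induction q with
  | nil => intro h1 h2; exact absurd h1 h2
  | @cons x y z ha q ih =>
    intro h1 h2
    by_cases hm : y ∈ S
    · exact ih hm h2
    · exact ⟨x, y, ha, h1, hm⟩

/-- connected components induce connected graphs -/

lemma comp_connected (c : G.ConnectedComponent) : (G.induce c.supp).Connected := by
  classical
  rw [connected_induce_iff, Subgraph.connected_iff_forall_exists_walk_subgraph]
  constructor
  · obtain ⟨v, hv⟩ := c.exists_rep
    exact ⟨v, by show v ∈ c.supp; exact hv⟩
  · intro u v hu hv
    simp only [Subgraph.induce_verts, Subgraph.verts_top] at hu hv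
    rw [ConnectedComponent.mem_supp_iff] at hu hv
    have hr : G.Reachable u v := ConnectedComponent.exact (hu.trans hv.symm)
    obtain ⟨p⟩ := hr
    refine ⟨p, le_trans p.toSubgraph_le_induce_support (Subgraph.induce_mono_right ?_)⟩
    intro y hy
    rw [ConnectedComponent.mem_supp_iff, ← hu]
    exact (ConnectedComponent.sound ⟨p.takeUntil y hy⟩).symm

lemma three_neighbors_collide (h1 : ClawFree G) (h2 : G.CliqueFree 3)
    {v a b c : V} (hva : G.Adj v a) (hvb : G.Adj v b) (hvc : G.Adj v c) :
    a = b ∨ a = c ∨ b = c := by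
  classical
  by_contra hne
  push_neg at hne
  obtain ⟨hab, hac, hbc⟩ := hne
  have nadj : ∀ x y : V, G.Adj v x → G.Adj v y → ¬ G.Adj x y := by
    intro x y hx hy hxy
    exact h2 {v, x, y} (is3Clique_triple_iff.mpr ⟨hx, hy, hxy⟩)
  have nab := nadj a b hva hvb
  have nac := nadj a c hva hvc
  have nbc := nadj b c hvb hvc
  have hmap : ∀ i j : Fin 4, G.Adj (![v, a, b, c] i) (![v, a, b, c] j) ↔ claw.Adj i j := by
    intro i j
    fin_cases i <;> fin_cases j <;>
      simp_all [claw_adj, G.adj_comm, hva.ne, hvb.ne, hvc.ne, hva.ne', hvb.ne', hvc.ne']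
  have hinj : Function.Injective ![v, a, b, c] := by
    intro i j hij
    by_contra hne
    have : claw.Adj i j ∨ ¬ (claw.Adj i j ∨ claw.Adj j i) ∨ claw.Adj j i := by tauto
    -- simpler: case analysis
    clear this
    fin_cases i <;> fin_cases j <;> simp_all [hva.ne', hvb.ne', hvc.ne']
  exact h1.false ⟨⟨![v, a, b, c], hinj⟩, hmap _ _⟩

lemma classify [Fintype V] (hconn : G.Connected)
    (hdeg : ∀ v a b c : V, G.Adj v a → G.Adj v b → G.Adj v c → a = b ∨ a = c ∨ b = c) :
    (∃ n, 3 ≤ n ∧ Nonempty (G ≃g cycleGraph n)) ∨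
    (∃ n, 1 ≤ n ∧ Nonempty (G ≃g pathGraph n)) := by
  classical
  obtain ⟨v⟩ := hconn.nonempty
  set P : ℕ → Prop := fun k => ∃ (a : V) (b : V) (p : G.Walk a b), p.IsPath ∧ p.length = k with hP
  have hP0 : P 0 := ⟨v, v, Walk.nil, by simp, rfl⟩
  have hPbd : ∀ k, P k → k ≤ Fintype.card V := by
    rintro k ⟨a, b, p, hp, rfl⟩; exact hp.length_lt.le
  obtain ⟨u, w, p, hp, hlen⟩ : P (Nat.findGreatest P (Fintype.card V)) :=
    Nat.findGreatest_spec (Nat.zero_le _) hP0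
  set N := Nat.findGreatest P (Fintype.card V) with hN
  have hmax : ∀ k, P k → k ≤ N := fun k hk => Nat.le_findGreatest (hPbd k hk) hk
  clear_value N
  set s : ℕ → V := p.getVert with hs
  have hadj : ∀ i, i < N → G.Adj (s i) (s (i + 1)) := fun i hi =>
    p.adj_getVert_succ (by omega)
  have hinj : ∀ i ≤ N, ∀ j ≤ N, s i = s j → i = j := by
    intro i hi j hj h
    exact IsPath.getVert_inj' hp (by omega) (by omega) h
  have hmem : ∀ i, i ≤ N → s i ∈ p.support := by
    intro i hi
    rw [Walk.mem_support_iff_exists_getVert]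
    exact ⟨i, rfl, by omega⟩
  -- pinning of internal vertices
  have hpin : ∀ i, 0 < i → i < N → ∀ x, G.Adj (s i) x → x = s (i - 1) ∨ x = s (i + 1) := by
    intro i h0 hN' x hx
    have h1 : G.Adj (s i) (s (i - 1)) := by
      have := hadj (i - 1) (by omega)
      rw [show i - 1 + 1 = i by omega] at this
      exact this.symm
    have h2 : G.Adj (s i) (s (i + 1)) := hadj i hN'
    rcases hdeg (s i) x (s (i - 1)) (s (i + 1)) hx h1 h2 with h | h | h
    · exact Or.inl h
    · exact Or.inr h
    · exact absurd (hinj _ (by omega) _ (by omega) h) (by omega)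
  -- endpoints: neighbors lie in the support
  have hend0 : ∀ x, G.Adj x (s 0) → x ∈ p.support := by
    intro x hx
    by_contra hxs
    have hx0 : G.Adj x u := by rwa [hs, Walk.getVert_zero] at hx
    have : P (N + 1) := ⟨x, w, Walk.cons hx0 p, (Walk.cons_isPath_iff _ _).mpr ⟨hp, hxs⟩, by simp [hlen]⟩
    exact absurd (hmax _ this) (by omega)
  have hendN : ∀ x, G.Adj (s N) x → x ∈ p.support := by
    intro x hx
    by_contra hxs
    have hxw : G.Adj x w := by
      have : s N = w := by rw [hs, ← hlen]; exact p.getVert_length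
      rw [this] at hx; exact hx.symm
    have : P (N + 1) := ⟨x, u, Walk.cons hxw p.reverse,
      (Walk.cons_isPath_iff _ _).mpr ⟨(Walk.isPath_reverse_iff p).mpr hp, by
        rwa [Walk.support_reverse, List.mem_reverse]⟩, by simp [hlen]⟩
    exact absurd (hmax _ this) (by omega)
  -- the path covers everything
  have hall : ∀ x : V, x ∈ p.support := by
    intro x
    by_contra hxs
    obtain ⟨q⟩ : G.Reachable u x := hconn.preconnected u x
    obtain ⟨y, z, hyz, hyS, hzS⟩ :=
      exists_boundary_edge' (S := {t | t ∈ p.support}) q p.start_mem_support hxs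
    obtain ⟨i, rfl, hi⟩ := Walk.mem_support_iff_exists_getVert.mp hyS
    rw [hlen] at hi
    rcases Nat.eq_zero_or_pos i with rfl | h0
    · exact hzS (hend0 z hyz.symm)
    rcases eq_or_lt_of_le hi with hiN | hiN
    · subst hiN; exact hzS (hendN z hyz)
    rcases hpin i h0 hiN z hyz with rfl | rfl
    · exact hzS (hmem _ (by omega))
    · exact hzS (hmem _ (by omega))
  -- the map
  set f : Fin (N + 1) → V := fun i => s i.val with hf
  have hfinj : Function.Injective f := by
    intro i j h
    exact Fin.ext (hinj i.val (by omega) j.val (by omega) h)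
  have hfsurj : Function.Surjective f := by
    intro x
    obtain ⟨i, hgv, hi⟩ := Walk.mem_support_iff_exists_getVert.mp (hall x)
    exact ⟨⟨i, by omega⟩, hgv⟩
  have hfbij : Function.Bijective f := ⟨hfinj, hfsurj⟩
  by_cases hcyc : G.Adj (s N) (s 0) ∧ 2 ≤ N
  · -- cycle case
    obtain ⟨hadjNW, hN2⟩ := hcyc
    -- adjacency characterisation
    have hchar : ∀ i j : ℕ, i ≤ N → j ≤ N →
        (G.Adj (s i) (s j) ↔ (j = i + 1 ∨ i = j + 1 ∨ (i = 0 ∧ j = N) ∨ (j = 0 ∧ i = N))) := by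
      intro i j hi hj
      constructor
      · intro hij
        have hne : i ≠ j := fun h => G.irrefl (h ▸ hij)
        rcases Nat.eq_zero_or_pos i with rfl | hi0
        · -- i = 0 : neighbors of s 0 are s 1 and s N
          rcases hdeg (s 0) (s j) (s 1) (s N) hij (hadj 0 (by omega)) hadjNW.symm with h | h | h
          · have := hinj _ hj _ (by omega) h; omega
          · have := hinj _ hj _ le_rfl h; omega
          · exact absurd (hinj _ (by omega) _ le_rfl h) (by omega)
        rcases eq_or_lt_of_le hi with hiN | hiN
        · -- i = N
          subst hiN
          have hprev : G.Adj (s i) (s (i - 1)) := by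
            have := hadj (i-1) (by omega)
            rw [show i - 1 + 1 = i by omega] at this
            exact this.symm
          rcases hdeg (s i) (s j) (s (i - 1)) (s 0) hij hprev hadjNW with h | h | h
          · have := hinj _ hj _ (by omega) h; omega
          · have := hinj _ hj _ (by omega) h; omega
          · exact absurd (hinj _ (by omega) _ (by omega) h) (by omega)
        · rcases hpin i hi0 hiN _ hij with h | h
          · have := hinj _ hj _ (by omega) h; omega
          · have := hinj _ hj _ (by omega) h; omega
      · rintro (rfl | rfl | ⟨rfl, rfl⟩ | ⟨rfl, rfl⟩)
        · exact hadj i (by omega)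
        · exact (hadj j (by omega)).symm
        · exact hadjNW.symm
        · exact hadjNW
    obtain ⟨M, rfl⟩ : ∃ M, N = M + 2 := ⟨N - 2, by omega⟩
    refine Or.inl ⟨M + 1 + 2, by omega, ⟨?_⟩⟩
    refine Iso.symm ⟨Equiv.ofBijective f hfbij, ?_⟩
    intro i j
    show G.Adj (f i) (f j) ↔ (cycleGraph (M + 1 + 2)).Adj i j
    rw [cycleGraph_adj]
    have hvi : i.val ≤ M + 2 := by omega
    have hvj : j.val ≤ M + 2 := by omega
    rw [hchar i.val j.val hvi hvj]
    constructor
    · rintro (h | h | ⟨h1, h2⟩ | ⟨h1, h2⟩)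
      · exact Or.inr (by rw [Fin.ext_iff]; simp only [Fin.val_one]; rw [fin_sub_val_one]; omega)
      · exact Or.inl (by rw [Fin.ext_iff]; simp only [Fin.val_one]; rw [fin_sub_val_one]; omega)
      · exact Or.inl (by rw [Fin.ext_iff]; simp only [Fin.val_one]; rw [fin_sub_val_one]; omega)
      · exact Or.inr (by rw [Fin.ext_iff]; simp only [Fin.val_one]; rw [fin_sub_val_one]; omega)
    · rintro (h | h)
      · rw [Fin.ext_iff] at h
        simp only [Fin.val_one] at h
        rw [fin_sub_val_one] at h
        omega
      · rw [Fin.ext_iff] at h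
        simp only [Fin.val_one] at h
        rw [fin_sub_val_one] at h
        omega
  · -- path case
    have hchar : ∀ i j : ℕ, i ≤ N → j ≤ N →
        (G.Adj (s i) (s j) ↔ (j = i + 1 ∨ i = j + 1)) := by
      intro i j hi hj
      constructor
      · intro hij
        have hne : i ≠ j := fun h => G.irrefl (h ▸ hij)
        -- handle via pinning at whichever of i, j is internal
        rcases Nat.lt_or_ge 0 i with hi0 | hi0
        · rcases Nat.lt_or_ge i N with hiN | hiN
          · rcases hpin i hi0 hiN _ hij with h | h
            · have := hinj _ hj _ (by omega) h; omega
            · have := hinj _ hj _ (by omega) h; omega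
          · -- i = N
            have hiN' : i = N := by omega
            rcases Nat.lt_or_ge 0 j with hj0 | hj0
            · rcases Nat.lt_or_ge j N with hjN | hjN
              · rcases hpin j hj0 hjN _ hij.symm with h | h
                · have := hinj _ (by omega) _ (by omega) h; omega
                · have := hinj _ (by omega) _ (by omega) h; omega
              · omega
            · -- j = 0, i = N, adjacency of endpoints: only ok if N ≤ 1
              have hj0' : j = 0 := by omega
              rw [hiN', hj0'] at hij
              have : ¬ (2 ≤ N) := fun h2 => hcyc ⟨hij, h2⟩
              omega
        · -- i = 0
          have hi0' : i = 0 := by omega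
          subst hi0'
          rcases Nat.lt_or_ge 0 j with hj0 | hj0
          · rcases Nat.lt_or_ge j N with hjN | hjN
            · rcases hpin j hj0 hjN _ hij.symm with h | h
              · have := hinj _ (by omega) _ (by omega) h; omega
              · have := hinj _ (by omega) _ (by omega) h; omega
            · have hjN' : j = N := by omega
              rw [hjN'] at hij
              have : ¬ (2 ≤ N) := fun h2 => hcyc ⟨hij.symm, h2⟩
              omega
          · omega
      · rintro (rfl | rfl)
        · exact hadj i (by omega)
        · exact (hadj j (by omega)).symm
    refine Or.inr ⟨N + 1, by omega, ⟨?_⟩⟩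
    refine Iso.symm ⟨Equiv.ofBijective f hfbij, ?_⟩
    intro i j
    show G.Adj (f i) (f j) ↔ (pathGraph (N + 1)).Adj i j
    rw [pathGraph_adj, hchar i.val j.val (by omega) (by omega)]
    omega

end helpers
-- appended to full.lean

section main
variable {V : Type*}

lemma neighbors_cycle {n : ℕ} (hn : 4 ≤ n) {v a b c : Fin n}
    (ha : (cycleGraph n).Adj v a) (hb : (cycleGraph n).Adj v b) (hc : (cycleGraph n).Adj v c) :
    a = b ∨ a = c ∨ b = c := by
  obtain ⟨m, rfl⟩ : ∃ m, n = m + 2 := ⟨n - 2, by omega⟩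
  rw [cycleGraph_adj] at ha hb hc
  by_contra hne
  push_neg at hne
  obtain ⟨hab, hac, hbc⟩ := hne
  have hval : ∀ x y : Fin (m + 2), x - y = 1 → x.val = y.val + 1 ∨ (x.val = 0 ∧ y.val = m + 1) := by
    intro x y hxy
    have := Fin.ext_iff.mp hxy
    simp only [Fin.val_one] at this
    rw [fin_sub_val_one] at this
    omega
  have hab' := Fin.val_ne_of_ne hab
  have hac' := Fin.val_ne_of_ne hac
  have hbc' := Fin.val_ne_of_ne hbc
  have hv := v.isLt
  have haa := a.isLt
  have hbb := b.isLt
  have hcc := c.isLt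
  rcases ha with h | h <;> rcases hb with h2 | h2 <;> rcases hc with h3 | h3 <;>
    [ (have e1 := hval _ _ h; have e2 := hval _ _ h2; have e3 := hval _ _ h3);
      (have e1 := hval _ _ h; have e2 := hval _ _ h2; have e3 := hval _ _ h3);
      (have e1 := hval _ _ h; have e2 := hval _ _ h2; have e3 := hval _ _ h3);
      (have e1 := hval _ _ h; have e2 := hval _ _ h2; have e3 := hval _ _ h3);
      (have e1 := hval _ _ h; have e2 := hval _ _ h2; have e3 := hval _ _ h3);
      (have e1 := hval _ _ h; have e2 := hval _ _ h2; have e3 := hval _ _ h3);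
      (have e1 := hval _ _ h; have e2 := hval _ _ h2; have e3 := hval _ _ h3);
      (have e1 := hval _ _ h; have e2 := hval _ _ h2; have e3 := hval _ _ h3)] <;>
    omega

lemma neighbors_path {n : ℕ} {v a b c : Fin n}
    (ha : (pathGraph n).Adj v a) (hb : (pathGraph n).Adj v b) (hc : (pathGraph n).Adj v c) :
    a = b ∨ a = c ∨ b = c := by
  rw [pathGraph_adj] at ha hb hc
  by_contra hne
  push_neg at hne
  obtain ⟨hab, hac, hbc⟩ := hne
  have hab' := Fin.val_ne_of_ne hab
  have hac' := Fin.val_ne_of_ne hac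
  have hbc' := Fin.val_ne_of_ne hbc
  omega

lemma triangle_free_cycle {n : ℕ} (hn : 4 ≤ n) : (cycleGraph n).CliqueFree 3 := by
  intro t ht
  rw [SimpleGraph.is3Clique_iff] at ht
  obtain ⟨a, b, c, hab, hac, hbc, rfl⟩ := ht
  obtain ⟨m, rfl⟩ : ∃ m, n = m + 2 := ⟨n - 2, by omega⟩
  rw [cycleGraph_adj] at hab hac hbc
  have hval : ∀ x y : Fin (m + 2), x - y = 1 → x.val = y.val + 1 ∨ (x.val = 0 ∧ y.val = m + 1) := by
    intro x y hxy
    have := Fin.ext_iff.mp hxy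
    simp only [Fin.val_one] at this
    rw [fin_sub_val_one] at this
    omega
  have haa := a.isLt
  have hbb := b.isLt
  have hcc := c.isLt
  rcases hab with h | h <;> rcases hac with h2 | h2 <;> rcases hbc with h3 | h3 <;>
    [ (have e1 := hval _ _ h; have e2 := hval _ _ h2; have e3 := hval _ _ h3);
      (have e1 := hval _ _ h; have e2 := hval _ _ h2; have e3 := hval _ _ h3);
      (have e1 := hval _ _ h; have e2 := hval _ _ h2; have e3 := hval _ _ h3);
      (have e1 := hval _ _ h; have e2 := hval _ _ h2; have e3 := hval _ _ h3);
      (have e1 := hval _ _ h; have e2 := hval _ _ h2; have e3 := hval _ _ h3);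
      (have e1 := hval _ _ h; have e2 := hval _ _ h2; have e3 := hval _ _ h3);
      (have e1 := hval _ _ h; have e2 := hval _ _ h2; have e3 := hval _ _ h3);
      (have e1 := hval _ _ h; have e2 := hval _ _ h2; have e3 := hval _ _ h3)] <;>
    omega

lemma triangle_free_path {n : ℕ} : (pathGraph n).CliqueFree 3 := by
  intro t ht
  rw [SimpleGraph.is3Clique_iff] at ht
  obtain ⟨a, b, c, hab, hac, hbc, rfl⟩ := ht
  rw [pathGraph_adj] at hab hac hbc
  omega

end main

/-- A graph `U` is claw-free and triangle-free iff every connected component of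
    `U` is a cycle of length at least 4, a path, or an isolated vertex. -/
theorem clawFree_triangleFree_iff_components {V : Type*} [Fintype V]
    (U : SimpleGraph V) :
    (ClawFree U ∧ U.CliqueFree 3) ↔ ComponentsCyclePath U := by
  classical
  constructor
  · rintro ⟨h1, h2⟩ c
    letI : Fintype ↥c.supp := Fintype.ofFinite _
    have hconn : (U.induce c.supp).Connected := comp_connected c
    have h1' : ClawFree (U.induce c.supp) :=
      ⟨fun e => h1.false ((SimpleGraph.Embedding.induce c.supp).comp e)⟩
    have h2' : (U.induce c.supp).CliqueFree 3 :=
      h2.comap (SimpleGraph.Embedding.induce c.supp).isContained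
    rcases classify hconn
        (fun v a b c hva hvb hvc => three_neighbors_collide h1' h2' hva hvb hvc) with
      ⟨n, hn3, ⟨φ⟩⟩ | hpath
    · rcases Nat.lt_or_ge n 4 with h4 | h4
      · have hn : n = 3 := by omega
        subst hn
        have h3' : (cycleGraph 3).CliqueFree 3 := h2'.comap φ.symm.toEmbedding.isContained
        rw [cycleGraph_three_eq_top] at h3'
        exact absurd h3' (not_cliqueFree_of_top_embedding (SimpleGraph.Embedding.refl).isContained)
      · exact Or.inl ⟨n, h4, ⟨φ⟩⟩
    · exact Or.inr hpath
  · intro h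
    constructor
    · refine ⟨fun e => ?_⟩
      set c := U.connectedComponentMk (e 0) with hc
      have hadj : ∀ i : Fin 4, i ≠ 0 → U.Adj (e 0) (e i) := by
        intro i hi
        exact e.map_rel_iff.mpr (claw_adj.mpr ⟨hi.symm, Or.inl rfl⟩)
      have hmem : ∀ i : Fin 4, e i ∈ c.supp := by
        intro i
        rw [SimpleGraph.ConnectedComponent.mem_supp_iff]
        by_cases hi : i = 0
        · rw [hi, hc]
        · exact (SimpleGraph.ConnectedComponent.sound (hadj i hi).symm.reachable)
      have e' : claw ↪g U.induce c.supp := by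
        refine ⟨⟨fun i => ⟨e i, hmem i⟩, fun i j hij => e.injective (congrArg Subtype.val hij)⟩, ?_⟩
        intro i j
        simp only [Function.Embedding.coeFn_mk, SimpleGraph.comap_adj,
          Function.Embedding.coe_subtype]
        exact e.map_rel_iff
      rcases h c with ⟨n, hn, ⟨φ⟩⟩ | ⟨n, hn, ⟨φ⟩⟩
      · have ψ : claw ↪g cycleGraph n := φ.toEmbedding.comp e'
        have h1 : (cycleGraph n).Adj (ψ 0) (ψ 1) :=
          ψ.map_rel_iff.mpr (claw_adj.mpr ⟨by decide, Or.inl rfl⟩)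
        have h2 : (cycleGraph n).Adj (ψ 0) (ψ 2) :=
          ψ.map_rel_iff.mpr (claw_adj.mpr ⟨by decide, Or.inl rfl⟩)
        have h3 : (cycleGraph n).Adj (ψ 0) (ψ 3) :=
          ψ.map_rel_iff.mpr (claw_adj.mpr ⟨by decide, Or.inl rfl⟩)
        rcases neighbors_cycle hn h1 h2 h3 with hh | hh | hh <;>
          simp_all [ψ.injective.eq_iff]
      · have ψ : claw ↪g pathGraph n := φ.toEmbedding.comp e'
        have h1 : (pathGraph n).Adj (ψ 0) (ψ 1) :=
          ψ.map_rel_iff.mpr (claw_adj.mpr ⟨by decide, Or.inl rfl⟩)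
        have h2 : (pathGraph n).Adj (ψ 0) (ψ 2) :=
          ψ.map_rel_iff.mpr (claw_adj.mpr ⟨by decide, Or.inl rfl⟩)
        have h3 : (pathGraph n).Adj (ψ 0) (ψ 3) :=
          ψ.map_rel_iff.mpr (claw_adj.mpr ⟨by decide, Or.inl rfl⟩)
        rcases neighbors_path h1 h2 h3 with hh | hh | hh <;>
          simp_all [ψ.injective.eq_iff]
    · intro t ht
      rw [SimpleGraph.is3Clique_iff] at ht
      obtain ⟨a, b, d, hab, had, hbd, rfl⟩ := ht
      set c := U.connectedComponentMk a with hc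
      have hb : b ∈ c.supp := SimpleGraph.ConnectedComponent.sound hab.symm.reachable
      have hd : d ∈ c.supp := SimpleGraph.ConnectedComponent.sound had.symm.reachable
      have ha : a ∈ c.supp := by rw [SimpleGraph.ConnectedComponent.mem_supp_iff, hc]
      have hab' : (U.induce c.supp).Adj ⟨a, ha⟩ ⟨b, hb⟩ := hab
      have had' : (U.induce c.supp).Adj ⟨a, ha⟩ ⟨d, hd⟩ := had
      have hbd' : (U.induce c.supp).Adj ⟨b, hb⟩ ⟨d, hd⟩ := hbd
      rcases h c with ⟨n, hn, ⟨φ⟩⟩ | ⟨n, hn, ⟨φ⟩⟩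
      · exact triangle_free_cycle hn {φ ⟨a, ha⟩, φ ⟨b, hb⟩, φ ⟨d, hd⟩}
          (SimpleGraph.is3Clique_triple_iff.mpr
            ⟨φ.map_rel_iff.mpr hab', φ.map_rel_iff.mpr had', φ.map_rel_iff.mpr hbd'⟩)
      · exact triangle_free_path {φ ⟨a, ha⟩, φ ⟨b, hb⟩, φ ⟨d, hd⟩}
          (SimpleGraph.is3Clique_triple_iff.mpr
            ⟨φ.map_rel_iff.mpr hab', φ.map_rel_iff.mpr had', φ.map_rel_iff.mpr hbd'⟩)
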